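/- Let (X, Δ) be a b-suprametric space with constants s ≥ 1, c ≥ 0, θ ∈ Θ₁, and T: X → X satisfying Δ(Tx,Ty) ≤ θ(max{Δ(x,y), Δ(x,Tx), Δ(y,Ty)}) for all x,y. Suppose {Tⁿx} converges to some z ∈ X with Δ(Tⁿx, z) → 0 and Δ(Tⁿx, T^{n+1}x) → 0, and suppose Δ is separately continuous. Then z is a fixed point of T. -/
import Mathlib


theorem limit_is_fixed_point_sep_cont {X : Type*} (Δ : X → X → ℝ) (s c : ℝ)
    (hs : 1 ≤ s) (hc : 0 ≤ c)
    (h_nonneg : ∀ x y, 0 ≤ Δ x y)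
    (h_eq : ∀ x y, Δ x y = 0 ↔ x = y)
    (h_symm : ∀ x y, Δ x y = Δ y x)
    (h_supra : ∀ x y z, Δ x y ≤ s * (Δ x z + Δ z y) + c * Δ x z * Δ z y)
    (θ : ℝ → ℝ)
    (hθ_mono : ∀ a b, 0 ≤ a → a ≤ b → θ a ≤ θ b)
    (hθ_nonneg : ∀ t, 0 ≤ t → 0 ≤ θ t)
    (hθ_iter : ∀ t, 0 < t → Filter.Tendsto (fun n => θ^[n] t) Filter.atTop (nhds 0))
    (T : X → X)
    (h_contr : ∀ x y, Δ (T x) (T y) ≤ θ (max (Δ x y) (max (Δ x (T x)) (Δ y (T y)))))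
    (x z : X)
    (h_lim : Filter.Tendsto (fun n => Δ (T^[n] x) z) Filter.atTop (nhds 0))
    (h_gap : Filter.Tendsto (fun n => Δ (T^[n] x) (T^[n + 1] x)) Filter.atTop (nhds 0))
    (h_sep_cont : ∀ (u : ℕ → X) (y : X),
      Filter.Tendsto (fun n => Δ (u n) y) Filter.atTop (nhds 0) →
      ∀ w, Filter.Tendsto (fun n => Δ w (u n)) Filter.atTop (nhds (Δ w y))) :
    T z = z := by
  by_contra hne
  set d : ℝ := Δ z (T z) with hd_def
  have hd_pos : 0 < d := by
    rcases lt_or_eq_of_le (h_nonneg z (T z)) with h | h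
    · exact h
    · exact absurd ((h_eq z (T z)).mp h.symm).symm hne
  -- θ d < d
  have hθd : θ d < d := by
    by_contra hle
    push_neg at hle
    have key : ∀ n, d ≤ θ^[n] d := by
      intro n
      induction n with
      | zero => simp
      | succ n ih =>
        rw [Function.iterate_succ_apply']
        calc d ≤ θ d := hle
        _ ≤ θ (θ^[n] d) := hθ_mono _ _ hd_pos.le ih
    have := le_of_tendsto_of_tendsto' tendsto_const_nhds (hθ_iter d hd_pos) key
    linarith
  -- the shifted sequence converges to z
  have h_lim' : Filter.Tendsto (fun n => Δ (T^[n + 1] x) z) Filter.atTop (nhds 0) :=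
    h_lim.comp (Filter.tendsto_add_atTop_nat 1)
  -- separate continuity
  have h_cont := h_sep_cont (fun n => T^[n + 1] x) z h_lim' (T z)
  -- eventual bound
  have h_ev : ∀ᶠ n in Filter.atTop, Δ (T z) (T^[n + 1] x) ≤ θ d := by
    have h1 : ∀ᶠ n in Filter.atTop, Δ (T^[n] x) z < d :=
      h_lim.eventually (gt_mem_nhds hd_pos)
    have h2 : ∀ᶠ n in Filter.atTop, Δ (T^[n] x) (T^[n + 1] x) < d :=
      h_gap.eventually (gt_mem_nhds hd_pos)
    filter_upwards [h1, h2] with n hn1 hn2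
    have hit : T^[n + 1] x = T (T^[n] x) := Function.iterate_succ_apply' T n x
    rw [hit] at hn2 ⊢
    have hcontr := h_contr (T^[n] x) z
    have hmax : max (Δ (T^[n] x) z) (max (Δ (T^[n] x) (T (T^[n] x))) (Δ z (T z))) ≤ d :=
      max_le hn1.le (max_le hn2.le le_rfl)
    calc Δ (T z) (T (T^[n] x)) = Δ (T (T^[n] x)) (T z) := h_symm _ _
      _ ≤ _ := hcontr
      _ ≤ θ d := hθ_mono _ _ (le_max_of_le_left (h_nonneg _ _)) hmax
  have hfinal : Δ (T z) z ≤ θ d := le_of_tendsto h_cont h_ev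
  rw [h_symm (T z) z] at hfinal
  linarith
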